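/- Let (Ω, P, π) be a finite irreducible reversible Markov chain. Then for any states x, y ∈ Ω and any times s, t ≥ 0, we have P^{s+t}(x,y)/π(y) ≥ (1 - ‖P^t(x,·) - P^s(y,·)‖_TV)². -/
import Mathlib


open Finset

/-- For a finite irreducible reversible Markov chain `(Ω, P, π)`,
for all states `x, y` and times `s, t ≥ 0`,
`P^{s+t}(x,y)/π(y) ≥ (1 - ‖P^t(x,·) - P^s(y,·)‖_TV)²`. -/
theorem stmt0 {Ω : Type*} [Fintype Ω] [Nonempty Ω] [DecidableEq Ω]
    (P : Matrix Ω Ω ℝ) (π : Ω → ℝ)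
    (hP0 : ∀ x y, 0 ≤ P x y) (hP1 : ∀ x, ∑ y, P x y = 1)
    (hπ0 : ∀ x, 0 < π x) (hπ1 : ∑ x, π x = 1)
    (hrev : ∀ x y, π x * P x y = π y * P y x)
    (hirr : ∀ x y, ∃ t : ℕ, 0 < (P ^ t) x y)
    (x y : Ω) (s t : ℕ) :
    (P ^ (s + t)) x y / π y ≥
      (1 - (1 / 2) * ∑ u, |(P ^ t) x u - (P ^ s) y u|) ^ 2 := by
  -- entries of powers are nonnegative
  have hpow0 : ∀ (n : ℕ) (u v : Ω), 0 ≤ (P ^ n) u v := by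
    intro n
    induction n with
    | zero =>
      intro u v
      by_cases h : u = v <;> simp [Matrix.one_apply, h]
    | succ n ih =>
      intro u v
      rw [pow_succ, Matrix.mul_apply]
      exact Finset.sum_nonneg fun w _ => mul_nonneg (ih u w) (hP0 w v)
  -- rows of powers sum to 1
  have hpow1 : ∀ (n : ℕ) (u : Ω), ∑ v, (P ^ n) u v = 1 := by
    intro n
    induction n with
    | zero => intro u; simp [Matrix.one_apply]
    | succ n ih =>
      intro u
      simp only [pow_succ, Matrix.mul_apply]
      rw [Finset.sum_comm]
      calc ∑ w, ∑ v, (P ^ n) u w * P w v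
          = ∑ w, (P ^ n) u w * ∑ v, P w v := by
            simp [Finset.mul_sum]
        _ = 1 := by simp [hP1, ih u]
  -- reversibility for powers
  have hrevn : ∀ (n : ℕ) (u v : Ω), π u * (P ^ n) u v = π v * (P ^ n) v u := by
    intro n
    induction n with
    | zero =>
      intro u v
      rcases eq_or_ne u v with h | h
      · subst h; rfl
      · simp [Matrix.one_apply, h, h.symm]
    | succ n ih =>
      intro u v
      have l : π u * (P ^ (n + 1)) u v = ∑ w, π u * ((P ^ n) u w * P w v) := by
        rw [pow_succ, Matrix.mul_apply, Finset.mul_sum]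
      have r : π v * (P ^ (n + 1)) v u = ∑ w, π v * (P v w * (P ^ n) w u) := by
        rw [pow_succ', Matrix.mul_apply, Finset.mul_sum]
      rw [l, r]
      refine Finset.sum_congr rfl fun w _ => ?_
      linear_combination (P w v) * ih u w + ((P ^ n) w u) * hrev w v
  set a : Ω → ℝ := fun u => (P ^ t) x u with ha
  set b : Ω → ℝ := fun u => (P ^ s) y u with hb
  have ha0 : ∀ u, 0 ≤ a u := fun u => hpow0 t x u
  have hb0 : ∀ u, 0 ≤ b u := fun u => hpow0 s y u
  -- key identity
  have key : (P ^ (s + t)) x y / π y = ∑ u, a u * b u / π u := by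
    rw [add_comm, pow_add, Matrix.mul_apply, Finset.sum_div]
    refine Finset.sum_congr rfl fun u _ => ?_
    have h := hrevn s u y
    rw [div_eq_div_iff (hπ0 y).ne' (hπ0 u).ne']
    simp only [ha, hb]
    linear_combination ((P ^ t) x u) * h
  -- min identity
  have hmin : ∑ u, min (a u) (b u) = 1 - (1 / 2) * ∑ u, |a u - b u| := by
    have : ∀ u, min (a u) (b u) = (a u + b u - |a u - b u|) / 2 := by
      intro u
      rcases le_total (a u) (b u) with h | h
      · rw [min_eq_left h, abs_of_nonpos (by linarith)]; ring
      · rw [min_eq_right h, abs_of_nonneg (by linarith)]; ring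
    simp only [this]
    rw [← Finset.sum_div, Finset.sum_sub_distrib, Finset.sum_add_distrib]
    have e1 : ∑ u, a u = 1 := hpow1 t x
    have e2 : ∑ u, b u = 1 := hpow1 s y
    rw [e1, e2]
    ring
  -- Cauchy–Schwarz
  have cs : (∑ u, min (a u) (b u)) ^ 2 ≤ ∑ u, a u * b u / π u := by
    have h1 : (∑ u, Real.sqrt (π u) * (min (a u) (b u) / Real.sqrt (π u))) ^ 2
        ≤ (∑ u, Real.sqrt (π u) ^ 2) * (∑ u, (min (a u) (b u) / Real.sqrt (π u)) ^ 2) :=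
      Finset.sum_mul_sq_le_sq_mul_sq _ _ _
    have hsq : ∀ u : Ω, Real.sqrt (π u) ≠ 0 :=
      fun u => (Real.sqrt_pos.mpr (hπ0 u)).ne'
    have e1 : ∀ u : Ω, Real.sqrt (π u) * (min (a u) (b u) / Real.sqrt (π u))
        = min (a u) (b u) := fun u => mul_div_cancel₀ _ (hsq u)
    have e2 : ∀ u : Ω, Real.sqrt (π u) ^ 2 = π u :=
      fun u => Real.sq_sqrt (hπ0 u).le
    have e3 : ∀ u : Ω, (min (a u) (b u) / Real.sqrt (π u)) ^ 2
        = min (a u) (b u) ^ 2 / π u := by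
      intro u
      rw [div_pow, e2]
    simp only [e1, e2, e3] at h1
    rw [hπ1, one_mul] at h1
    refine h1.trans (Finset.sum_le_sum fun u _ => ?_)
    have hmm : min (a u) (b u) ^ 2 ≤ a u * b u := by
      rw [sq]
      exact mul_le_mul (min_le_left _ _) (min_le_right _ _)
        (le_min (ha0 u) (hb0 u)) (ha0 u)
    gcongr
    exact (hπ0 u).le
  rw [key, ← hmin] at *
  calc (∑ u, min (a u) (b u)) ^ 2 ≤ ∑ u, a u * b u / π u := cs
    _ = _ := rfl
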